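/- arXiv:1111.3828 — 5 statements merged into one kernel-verified Lean document; each statement's English description precedes it below -/
import Mathlib

section
/- The image l(O_K^{*,+}) of the totally positive units under the logarithmic embedding l is a full lattice in the hyperplane L = {x ∈ ℝ^{s+t} : Σ_{i=1}^{s+t} x_i = 0}: it is a discrete subgroup of ℝ^{s+t} contained in L whose ℝ-linear span is all of L (equivalently, it is a free abelian group of rank s+t−1 spanning L). -/
/-!
Setting: `K` is a number field with exactly `s ≥ 1` real embeddings
`σr 0, …, σr (s-1) : K →+* ℝ` and `2t ≥ 2` complex (non-real) embeddings, of which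
`σc 0, …, σc (t-1) : K →+* ℂ` are pairwise non-conjugate representatives.
-/

noncomputable section
open NumberField

/-- The subgroup `O_K^{*,+}` of totally positive units: units `u` of the ring of integers
with `σᵢ(u) > 0` for every real embedding `σᵢ`, `i = 1, …, s`. -/
def posUnits (K : Type) [Field K] [NumberField K] {s : ℕ}
    (σr : Fin s → (K →+* ℝ)) : Subgroup (𝓞 K)ˣ where
  carrier := {u | ∀ i, 0 < σr i ((u : 𝓞 K) : K)}
  mul_mem' := by
    intro a b ha hb i
    push_cast [map_mul]
    exact mul_pos (ha i) (hb i)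
  one_mem' := by intro i; simp
  inv_mem' := by
    intro a ha i
    have h1 : σr i ((↑(a⁻¹ * a) : 𝓞 K) : K) = 1 := by simp
    have h2 : σr i ((↑(a⁻¹) : 𝓞 K) : K) * σr i ((↑a : 𝓞 K) : K) = 1 := by
      rw [← h1]; push_cast [map_mul]; ring
    nlinarith [ha i, h2]

/-- A subset of `ℝⁿ` is a lattice if it is discrete and its `ℝ`-linear span is all of `ℝⁿ`. -/
def IsLatticeSet {n : ℕ} (S : Set (Fin n → ℝ)) : Prop :=
  DiscreteTopology S ∧ Submodule.span ℝ S = ⊤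

/-- The projection of the logarithmic embedding `l` to the first `s` coordinates:
`u ↦ (log |σ₁(u)|, …, log |σ_s(u)|)`. -/
def projLog {K : Type} [Field K] [NumberField K] {s : ℕ}
    (σr : Fin s → (K →+* ℝ)) (u : (𝓞 K)ˣ) : Fin s → ℝ :=
  fun i => Real.log |σr i ((u : 𝓞 K) : K)|

/-- The logarithmic embedding
`l(u) = (log|σ₁(u)|, …, log|σ_s(u)|, 2 log|σ_{s+1}(u)|, …, 2 log|σ_{s+t}(u)|)`. -/
def logEmb {K : Type} [Field K] [NumberField K] {s t : ℕ}
    (σr : Fin s → (K →+* ℝ)) (σc : Fin t → (K →+* ℂ)) (u : (𝓞 K)ˣ) :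
    Fin (s + t) → ℝ :=
  Fin.append (fun i => Real.log |σr i ((u : 𝓞 K) : K)|)
    (fun j => 2 * Real.log ‖σc j ((u : 𝓞 K) : K)‖)

/-- A subgroup `U ⊆ O_K^{*,+}` is admissible if it is free abelian of rank `s` and the
projection of `l(U)` to the first `s` coordinates is a lattice in `ℝˢ`. -/
def Admissible {K : Type} [Field K] [NumberField K] {s : ℕ}
    (σr : Fin s → (K →+* ℝ)) (U : Subgroup (𝓞 K)ˣ) : Prop :=
  U ≤ posUnits K σr ∧ Nonempty (U ≃* Multiplicative (Fin s → ℤ)) ∧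
    IsLatticeSet (projLog σr '' (U : Set (𝓞 K)ˣ))

/-- The affine action of a pair `(u, a) ∈ O_K^{*,+} ⋉ O_K` on `ℂˢ × ℂᵗ`
(restricting to `ℍˢ × ℂᵗ`): `(u,a)·z = (σᵢ(u) zᵢ + σᵢ(a))ᵢ`. -/
def otAct {K : Type} [Field K] [NumberField K] {s t : ℕ}
    (σr : Fin s → (K →+* ℝ)) (σc : Fin t → (K →+* ℂ))
    (g : (𝓞 K)ˣ × 𝓞 K) (z : (Fin s → ℂ) × (Fin t → ℂ)) :
    (Fin s → ℂ) × (Fin t → ℂ) :=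
  (fun i => (σr i ((g.1 : 𝓞 K) : K) : ℂ) * z.1 i + (σr i (g.2 : K) : ℂ),
   fun j => σc j ((g.1 : 𝓞 K) : K) * z.2 j + σc j (g.2 : K))

/-- The hyperplane `L = {x ∈ ℝᵐ : ∑ xᵢ = 0}` as a submodule of `ℝᵐ`. -/
def sumZero (m : ℕ) : Submodule ℝ (Fin m → ℝ) where
  carrier := {x | ∑ i, x i = 0}
  add_mem' := by intro a b ha hb; simp_all [Finset.sum_add_distrib]
  zero_mem' := by simp
  smul_mem' := by intro c x hx; simp_all [← Finset.mul_sum]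

/-- The image `l(O_K^{*,+})` of the totally positive units under the
logarithmic embedding `l` is a full lattice in the hyperplane
`L = {x ∈ ℝ^{s+t} : ∑ xᵢ = 0}`: it is a discrete subgroup of `ℝ^{s+t}`
contained in `L` whose `ℝ`-linear span is all of `L`. -/
theorem logEmb_posUnits_isFullLattice
    (K : Type) [Field K] [NumberField K] (s t : ℕ) (hs : 1 ≤ s) (ht : 1 ≤ t)
    (σr : Fin s → (K →+* ℝ)) (hσr : Function.Bijective σr)
    (σc : Fin t → (K →+* ℂ)) (hσc : Function.Injective σc)
    (hσc_nonreal : ∀ j, ¬ ComplexEmbedding.IsReal (σc j))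
    (hσc_nonconj : ∀ j k, ComplexEmbedding.conjugate (σc j) ≠ σc k)
    (hσc_exh : ∀ φ : K →+* ℂ, ¬ ComplexEmbedding.IsReal φ →
      ∃ j, σc j = φ ∨ ComplexEmbedding.conjugate (σc j) = φ) :
    logEmb σr σc '' (posUnits K σr : Set (𝓞 K)ˣ) ⊆ (sumZero (s + t) : Set (Fin (s + t) → ℝ)) ∧
    DiscreteTopology (logEmb σr σc '' (posUnits K σr : Set (𝓞 K)ˣ)) ∧
    Submodule.span ℝ (logEmb σr σc '' (posUnits K σr : Set (𝓞 K)ˣ)) = sumZero (s + t) := by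
  classical
  set e : Fin (s + t) → InfinitePlace K :=
    Fin.append (fun i => InfinitePlace.mk (Complex.ofRealHom.comp (σr i)))
      (fun j => InfinitePlace.mk (σc j)) with he
  have hR : ∀ i : Fin s,
      e (Fin.castAdd t i) = InfinitePlace.mk (Complex.ofRealHom.comp (σr i)) :=
    fun i => Fin.append_left _ _ i
  have hC : ∀ j : Fin t, e (Fin.natAdd s j) = InfinitePlace.mk (σc j) :=
    fun j => Fin.append_right _ _ j
  have hreal : ∀ i : Fin s, ComplexEmbedding.IsReal (Complex.ofRealHom.comp (σr i)) := by
    intro i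
    rw [ComplexEmbedding.isReal_iff]
    ext x
    simp [ComplexEmbedding.conjugate_coe_eq]
  -- pointwise formula for the log embedding in terms of infinite places
  have hlog : ∀ (u : (𝓞 K)ˣ) (k : Fin (s + t)),
      logEmb σr σc u k =
        (InfinitePlace.mult (e k) : ℝ) * Real.log (e k ((u : 𝓞 K) : K)) := by
    intro u k
    induction k using Fin.addCases with
    | left i =>
      have h1 : InfinitePlace.IsReal (e (Fin.castAdd t i)) := by
        rw [hR, NumberField.InfinitePlace.isReal_mk_iff]; exact hreal i
      have h2 : InfinitePlace.mult (e (Fin.castAdd t i)) = 1 := by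
        simp [NumberField.InfinitePlace.mult, h1]
      have h3 : (e (Fin.castAdd t i)) ((u : 𝓞 K) : K) = |σr i ((u : 𝓞 K) : K)| := by
        rw [hR, NumberField.InfinitePlace.apply]
        simp
      rw [h2, h3, logEmb, Fin.append_left]
      simp
    | right j =>
      have h1 : ¬ InfinitePlace.IsReal (e (Fin.natAdd s j)) := by
        rw [hC, NumberField.InfinitePlace.isReal_mk_iff]; exact hσc_nonreal j
      have h2 : InfinitePlace.mult (e (Fin.natAdd s j)) = 2 := by
        simp [NumberField.InfinitePlace.mult, h1]
      have h3 : (e (Fin.natAdd s j)) ((u : 𝓞 K) : K)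
          = ‖σc j ((u : 𝓞 K) : K)‖ := by
        rw [hC, NumberField.InfinitePlace.apply]
      rw [h2, h3, logEmb, Fin.append_right]
      norm_num
  -- `e` is a bijection onto the infinite places
  have hinj : Function.Injective e := by
    intro k l
    induction k using Fin.addCases with
    | left i =>
      induction l using Fin.addCases with
      | left i' =>
        intro hkl
        rw [hR, hR, NumberField.InfinitePlace.mk_eq_iff] at hkl
        have hφ : Complex.ofRealHom.comp (σr i) = Complex.ofRealHom.comp (σr i') := by
          rcases hkl with h | h
          · exact h
          · rwa [ComplexEmbedding.isReal_iff.mp (hreal i)] at h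
        have : σr i = σr i' := by
          ext x
          exact Complex.ofReal_injective (RingHom.congr_fun hφ x)
        have : i = i' := hσr.injective this
        rw [this]
      | right j' =>
        intro hkl
        exfalso
        have h1 : InfinitePlace.IsReal (e (Fin.castAdd t i)) := by
          rw [hR, NumberField.InfinitePlace.isReal_mk_iff]; exact hreal i
        rw [hkl, hC, NumberField.InfinitePlace.isReal_mk_iff] at h1
        exact hσc_nonreal j' h1
    | right j =>
      induction l using Fin.addCases with
      | left i' =>
        intro hkl
        exfalso
        have h1 : InfinitePlace.IsReal (e (Fin.castAdd t i')) := by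
          rw [hR, NumberField.InfinitePlace.isReal_mk_iff]; exact hreal i'
        rw [← hkl, hC, NumberField.InfinitePlace.isReal_mk_iff] at h1
        exact hσc_nonreal j h1
      | right j' =>
        intro hkl
        rw [hC, hC, NumberField.InfinitePlace.mk_eq_iff] at hkl
        rcases hkl with h | h
        · rw [hσc h]
        · exact absurd h (hσc_nonconj j j')
  have hsurj : Function.Surjective e := by
    intro w
    by_cases hw : InfinitePlace.IsReal w
    · have hre : ComplexEmbedding.IsReal (NumberField.InfinitePlace.embedding w) :=
        NumberField.InfinitePlace.isReal_iff.mp hw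
      obtain ⟨i, hi⟩ := hσr.surjective hre.embedding
      refine ⟨Fin.castAdd t i, ?_⟩
      have : Complex.ofRealHom.comp (σr i) = NumberField.InfinitePlace.embedding w := by
        ext x
        rw [hi]
        exact hre.coe_embedding_apply x
      rw [hR, this, NumberField.InfinitePlace.mk_embedding]
    · obtain ⟨j, hj⟩ := hσc_exh (NumberField.InfinitePlace.embedding w)
        (fun h => hw (NumberField.InfinitePlace.isReal_iff.mpr h))
      refine ⟨Fin.natAdd s j, ?_⟩
      rw [hC]
      have : InfinitePlace.mk (σc j) = InfinitePlace.mk (NumberField.InfinitePlace.embedding w) :=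
        NumberField.InfinitePlace.mk_eq_iff.mpr hj
      rw [this, NumberField.InfinitePlace.mk_embedding]
  have hbij : Function.Bijective e := ⟨hinj, hsurj⟩
  set eE : Fin (s + t) ≃ InfinitePlace K := Equiv.ofBijective e hbij with heE
  have heEapp : ∀ k, eE k = e k := fun _ => rfl
  -- the sum of the coordinates of `logEmb u` is zero for every unit `u`
  have hsum : ∀ u : (𝓞 K)ˣ, ∑ k, logEmb σr σc u k = 0 := by
    intro u
    have h0 : ∀ w : InfinitePlace K, w ((u : 𝓞 K) : K) ≠ 0 := fun w =>
      ne_of_gt (NumberField.InfinitePlace.pos_iff.mpr (NumberField.Units.coe_ne_zero u))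
    have hre : ∑ k, logEmb σr σc u k
        = ∑ w : InfinitePlace K, (InfinitePlace.mult w : ℝ) * Real.log (w ((u : 𝓞 K) : K)) :=
      Fintype.sum_bijective e hbij _ _ (fun k => hlog u k)
    have h := congr_arg Real.log (NumberField.InfinitePlace.prod_eq_abs_norm ((u : 𝓞 K) : K))
    rw [NumberField.Units.norm, Rat.cast_one, Real.log_one,
      Real.log_prod (fun w _ => pow_ne_zero _ (h0 w))] at h
    simp_rw [Real.log_pow] at h
    rw [hre, h]
  -- containment in the hyperplane
  have hcont : logEmb σr σc '' (posUnits K σr : Set (𝓞 K)ˣ)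
      ⊆ (sumZero (s + t) : Set (Fin (s + t) → ℝ)) := by
    rintro x ⟨u, -, rfl⟩
    exact hsum u
  -- the comparison linear map with Mathlib's `logEmbedding`
  set Φ : (Fin (s + t) → ℝ) →ₗ[ℝ]
      ({w : InfinitePlace K // w ≠ NumberField.Units.dirichletUnitTheorem.w₀} → ℝ) :=
    LinearMap.funLeft ℝ ℝ
      (fun w : {w : InfinitePlace K // w ≠ NumberField.Units.dirichletUnitTheorem.w₀} =>
        eE.symm w.val) with hΦdef
  have hΦapp : ∀ (x : Fin (s + t) → ℝ)
      (w : {w : InfinitePlace K // w ≠ NumberField.Units.dirichletUnitTheorem.w₀}),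
      Φ x w = x (eE.symm w.val) := fun _ _ => rfl
  have hΦlog : ∀ u : (𝓞 K)ˣ,
      Φ (logEmb σr σc u) = NumberField.Units.logEmbedding K (Additive.ofMul u) := by
    intro u
    funext w
    rw [hΦapp, hlog, NumberField.Units.dirichletUnitTheorem.logEmbedding_component]
    have : e (eE.symm w.val) = w.val := eE.apply_symm_apply w.val
    rw [this]
  -- `Φ` is injective on the hyperplane
  have hΦinj : ∀ x ∈ sumZero (s + t), ∀ y ∈ sumZero (s + t), Φ x = Φ y → x = y := by
    intro x hx y hy hxy
    set k₀ : Fin (s + t) := eE.symm NumberField.Units.dirichletUnitTheorem.w₀ with hk₀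
    have hne : ∀ k, k ≠ k₀ → x k = y k := by
      intro k hk
      have hwne : e k ≠ NumberField.Units.dirichletUnitTheorem.w₀ := by
        intro h
        apply hk
        rw [hk₀, ← h, ← heEapp k, Equiv.symm_apply_apply]
      have h := congr_fun hxy ⟨e k, hwne⟩
      rw [hΦapp, hΦapp] at h
      have hek : eE.symm (e k) = k := by rw [← heEapp k, Equiv.symm_apply_apply]
      simpa [hek] using h
    have hxs : ∑ i, x i = 0 := hx
    have hys : ∑ i, y i = 0 := hy
    have herase : ∑ i ∈ Finset.univ.erase k₀, x i = ∑ i ∈ Finset.univ.erase k₀, y i :=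
      Finset.sum_congr rfl (fun i hi => hne i (Finset.ne_of_mem_erase hi))
    have hx' : x k₀ + ∑ i ∈ Finset.univ.erase k₀, x i = ∑ i, x i :=
      Finset.add_sum_erase _ x (Finset.mem_univ k₀)
    have hy' : y k₀ + ∑ i ∈ Finset.univ.erase k₀, y i = ∑ i, y i :=
      Finset.add_sum_erase _ y (Finset.mem_univ k₀)
    funext k
    by_cases hk : k = k₀
    · subst hk; linarith
    · exact hne k hk
  -- squares of units are totally positive
  have hsq : ∀ u : (𝓞 K)ˣ, u ^ 2 ∈ posUnits K σr := by
    intro u i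
    have h1 : σr i ((↑(u⁻¹ * u) : 𝓞 K) : K) = 1 := by simp
    have h2 : σr i ((↑(u⁻¹) : 𝓞 K) : K) * σr i ((↑u : 𝓞 K) : K) = 1 := by
      rw [← h1]; push_cast [map_mul]; ring
    have hne0 : σr i ((↑u : 𝓞 K) : K) ≠ 0 := right_ne_zero_of_mul_eq_one h2
    have h3 : σr i ((↑(u ^ 2) : 𝓞 K) : K) = σr i ((↑u : 𝓞 K) : K) ^ 2 := by
      have hc : ((↑(u ^ 2) : 𝓞 K) : K) = ((↑u : 𝓞 K) : K) ^ 2 := by push_cast; ring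
      rw [hc, map_pow]
    rw [h3, sq]
    exact mul_self_pos.mpr hne0
  have hdouble : ∀ u : (𝓞 K)ˣ, logEmb σr σc (u ^ 2) = (2 : ℝ) • logEmb σr σc u := by
    intro u
    funext k
    simp only [Pi.smul_apply, smul_eq_mul]
    rw [hlog, hlog]
    have hcast : ((↑(u ^ 2) : 𝓞 K) : K) = ((↑u : 𝓞 K) : K) ^ 2 := by push_cast; ring
    rw [hcast, map_pow, Real.log_pow]
    push_cast
    ring
  -- spans over all units vs totally positive units agree
  set S : Set (Fin (s + t) → ℝ) := logEmb σr σc '' (posUnits K σr : Set (𝓞 K)ˣ) with hS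
  set T : Set (Fin (s + t) → ℝ) := logEmb σr σc '' Set.univ with hT
  have hTS : Submodule.span ℝ T ≤ Submodule.span ℝ S := by
    rw [Submodule.span_le]
    rintro x ⟨u, -, rfl⟩
    have : logEmb σr σc u = (2 : ℝ)⁻¹ • logEmb σr σc (u ^ 2) := by
      rw [hdouble, smul_smul]; norm_num
    rw [this]
    exact Submodule.smul_mem _ _ (Submodule.subset_span ⟨u ^ 2, hsq u, rfl⟩)
  have hST : Submodule.span ℝ S = Submodule.span ℝ T :=
    le_antisymm (Submodule.span_mono (Set.image_mono (Set.subset_univ _))) hTS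
  have hTle : Submodule.span ℝ T ≤ sumZero (s + t) := by
    rw [Submodule.span_le]
    rintro x ⟨u, -, rfl⟩
    exact hsum u
  -- image of `T` under `Φ` is the unit lattice
  have himg : Φ '' T = (NumberField.Units.unitLattice K :
      Set ({w : InfinitePlace K // w ≠ NumberField.Units.dirichletUnitTheorem.w₀} → ℝ)) := by
    ext x
    constructor
    · rintro ⟨y, ⟨u, -, rfl⟩, rfl⟩
      rw [hΦlog]
      exact Submodule.mem_map.mpr ⟨Additive.ofMul u, trivial, rfl⟩
    · intro hx
      obtain ⟨y, -, rfl⟩ := Submodule.mem_map.mp hx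
      exact ⟨logEmb σr σc y.toMul, ⟨y.toMul, trivial, rfl⟩, hΦlog y.toMul⟩
  -- discreteness
  have hdisc : DiscreteTopology S := by
    have hΦcont : Continuous Φ := Φ.continuous_of_finiteDimensional
    have hsub : S ⊆ T := Set.image_mono (Set.subset_univ _)
    have hScont : S ⊆ (sumZero (s + t) : Set (Fin (s + t) → ℝ)) := hcont
    set f : S → (NumberField.Units.unitLattice K) :=
      fun x => ⟨Φ x.val, by
        have hm : Φ x.val ∈ (NumberField.Units.unitLattice K :
            Set ({w : InfinitePlace K // w ≠ NumberField.Units.dirichletUnitTheorem.w₀} → ℝ)) := by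
          rw [← himg]; exact Set.mem_image_of_mem _ (hsub x.prop)
        exact hm⟩ with hf
    have hfc : Continuous f :=
      Continuous.subtype_mk (hΦcont.comp continuous_subtype_val) _
    have hfi : Function.Injective f := by
      intro a b hab
      have h : Φ a.val = Φ b.val := congr_arg Subtype.val hab
      exact Subtype.ext (hΦinj a.val (hScont a.prop) b.val (hScont b.prop) h)
    exact DiscreteTopology.of_continuous_injective hfc hfi
  -- span equals the hyperplane
  have hspan : Submodule.span ℝ S = sumZero (s + t) := by
    refine le_antisymm (hST ▸ hTle) ?_
    rw [hST]
    intro x hx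
    have hmap : Submodule.map Φ (Submodule.span ℝ T) = ⊤ := by
      rw [Submodule.map_span, himg]
      exact NumberField.Units.dirichletUnitTheorem.unitLattice_span_eq_top K
    have : Φ x ∈ Submodule.map Φ (Submodule.span ℝ T) := by
      rw [hmap]; trivial
    obtain ⟨y, hyW, hyx⟩ := Submodule.mem_map.mp this
    have hxy : y = x := hΦinj y (hTle hyW) x hx hyx
    rwa [← hxy]
  exact ⟨hcont, hdisc, hspan⟩

end
end

section
/- There exists an admissible subgroup U for K: a subgroup U ⊆ O_K^{*,+}, free abelian of rank s, such that the image of U under the map u ↦ (log|σ₁(u)|,…,log|σ_s(u)|) (the projection of l(U) to the first s coordinates) is a lattice in ℝ^s, i.e. a discrete subgroup whose ℝ-linear span is all of ℝ^s. -/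
/-!
Setting: `K` is a number field with exactly `s ≥ 1` real embeddings
`σr 0, …, σr (s-1) : K →+* ℝ` and `2t ≥ 2` complex (non-real) embeddings, of which
`σc 0, …, σc (t-1) : K →+* ℂ` are pairwise non-conjugate representatives.
-/

noncomputable section
open NumberField

section AuxProof
open NumberField NumberField.InfinitePlace Finset

variable {K : Type} [Field K] [NumberField K]

/-- Product formula for units, logarithmic form. -/
lemma aux_sum_mult_log (u : (𝓞 K)ˣ) :
    ∑ w : InfinitePlace K, (mult w : ℝ) * Real.log (w ((u : 𝓞 K) : K)) = 0 := by
  have h := congr_arg Real.log (prod_eq_abs_norm ((u : 𝓞 K) : K))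
  rw [NumberField.Units.norm, Rat.cast_one, Real.log_one, Real.log_prod] at h
  · simpa [Real.log_pow] using h
  · exact fun w _ => pow_ne_zero _ (AbsoluteValue.ne_zero _ (NumberField.Units.coe_ne_zero u))

end AuxProof

/-- There exists an admissible subgroup `U` for `K`: a subgroup
`U ⊆ O_K^{*,+}`, free abelian of rank `s`, such that the image of `U` under
`u ↦ (log|σ₁(u)|, …, log|σ_s(u)|)` is a lattice in `ℝˢ`. -/
theorem exists_admissible_subgroup
    (K : Type) [Field K] [NumberField K] (s t : ℕ) (hs : 1 ≤ s) (ht : 1 ≤ t)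
    (σr : Fin s → (K →+* ℝ)) (hσr : Function.Bijective σr)
    (σc : Fin t → (K →+* ℂ)) (hσc : Function.Injective σc)
    (hσc_nonreal : ∀ j, ¬ ComplexEmbedding.IsReal (σc j))
    (hσc_nonconj : ∀ j k, ComplexEmbedding.conjugate (σc j) ≠ σc k)
    (hσc_exh : ∀ φ : K →+* ℂ, ¬ ComplexEmbedding.IsReal φ →
      ∃ j, σc j = φ ∨ ComplexEmbedding.conjugate (σc j) = φ) :
    ∃ U : Subgroup (𝓞 K)ˣ, U ≤ posUnits K σr ∧
      Nonempty (U ≃* Multiplicative (Fin s → ℤ)) ∧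
      IsLatticeSet (projLog σr '' (U : Set (𝓞 K)ˣ)) := by
  classical
  haveI : Nonempty (Fin s) := ⟨⟨0, hs⟩⟩
  -- nonvanishing of real embeddings on units
  have hne : ∀ (x : (𝓞 K)ˣ) (j : Fin s), σr j ((x : 𝓞 K) : K) ≠ 0 := fun x j =>
    (map_ne_zero (σr j)).mpr (NumberField.Units.coe_ne_zero x)
  -- the real infinite places
  set pl : Fin s → InfinitePlace K :=
    fun i => NumberField.InfinitePlace.mk ((Complex.ofRealHom).comp (σr i)) with hpl
  have hplreal : ∀ i, NumberField.InfinitePlace.IsReal (pl i) := by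
    intro i
    rw [hpl]
    refine NumberField.InfinitePlace.isReal_mk_iff.mpr ?_
    rw [NumberField.ComplexEmbedding.isReal_iff]
    ext x
    exact Complex.conj_ofReal _
  have hplv : ∀ i x, pl i x = |σr i x| := by
    intro i x
    rw [hpl]
    simp [NumberField.InfinitePlace.apply, Complex.norm_real]
  have hplinj : Function.Injective pl := by
    intro i j hij
    have hreal : NumberField.ComplexEmbedding.conjugate ((Complex.ofRealHom).comp (σr i)) =
        (Complex.ofRealHom).comp (σr i) := by
      rw [← NumberField.ComplexEmbedding.isReal_iff]
      rw [NumberField.ComplexEmbedding.isReal_iff]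
      ext x
      exact Complex.conj_ofReal _
    have h' : (Complex.ofRealHom).comp (σr i) = (Complex.ofRealHom).comp (σr j) := by
      rcases NumberField.InfinitePlace.mk_eq_iff.mp hij with h | h
      · exact h
      · rw [← hreal]; exact h
    have : σr i = σr j := by
      ext x
      have hx := RingHom.congr_fun h' x
      rw [RingHom.comp_apply, RingHom.comp_apply] at hx
      exact Complex.ofReal_injective hx
    exact hσr.injective this
  -- a complex place
  set wc : InfinitePlace K := NumberField.InfinitePlace.mk (σc ⟨0, ht⟩) with hwc
  have hwc_ne : ∀ i, wc ≠ pl i := by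
    intro i h
    exact hσc_nonreal ⟨0, ht⟩
      (NumberField.InfinitePlace.isReal_mk_iff.mp (by rw [← hwc] at *; rw [h]; exact hplreal i))
  -- the units from Dirichlet's theorem
  have hu_ex : ∀ i, ∃ u : (𝓞 K)ˣ, ∀ w : InfinitePlace K, w ≠ pl i →
      Real.log (w ((u : 𝓞 K) : K)) < 0 := fun i =>
    NumberField.Units.dirichletUnitTheorem.exists_unit K (pl i)
  choose u hu using hu_ex
  -- the matrix of logs
  set A : Matrix (Fin s) (Fin s) ℝ :=
    Matrix.of (fun j i => Real.log (pl j ((u i : 𝓞 K) : K))) with hA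
  have hAapp : ∀ j i, A j i = Real.log (pl j ((u i : 𝓞 K) : K)) := fun j i => rfl
  have hAdiag : ∀ i, A i i =
      ∑ w' ∈ Finset.univ.erase (pl i),
        (NumberField.InfinitePlace.mult w' : ℝ) * (- Real.log (w' ((u i : 𝓞 K) : K))) := by
    intro i
    have h0 := aux_sum_mult_log (u i)
    rw [← Finset.sum_erase_add _ _ (Finset.mem_univ (pl i))] at h0
    have hm : (NumberField.InfinitePlace.mult (pl i) : ℝ) = 1 := by
      rw [NumberField.InfinitePlace.mult, if_pos (hplreal i)]; norm_num
    rw [hm, one_mul] at h0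
    have h1 : A i i = - ∑ w' ∈ Finset.univ.erase (pl i),
        (NumberField.InfinitePlace.mult w' : ℝ) * Real.log (w' ((u i : 𝓞 K) : K)) := by
      rw [hAapp]; linarith
    rw [h1, ← Finset.sum_neg_distrib]
    exact Finset.sum_congr rfl fun w' _ => by ring
  have hdom : ∀ i, ∑ j ∈ Finset.univ.erase i, ‖A j i‖ < ‖A i i‖ := by
    intro i
    set F : InfinitePlace K → ℝ := fun w' =>
      (NumberField.InfinitePlace.mult w' : ℝ) * (- Real.log (w' ((u i : 𝓞 K) : K))) with hF
    have hFpos : ∀ w', w' ≠ pl i → 0 < F w' := by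
      intro w' hne'
      refine mul_pos ?_ (neg_pos.mpr (hu i w' hne'))
      exact_mod_cast NumberField.InfinitePlace.mult_pos
    have h1 : ∀ j ∈ Finset.univ.erase i, ‖A j i‖ ≤ F (pl j) := by
      intro j hj
      have hjne : pl j ≠ pl i := fun h => (Finset.mem_erase.mp hj).1 (hplinj h)
      have hneg : Real.log ((pl j) ((u i : 𝓞 K) : K)) < 0 := hu i (pl j) hjne
      have h1le : (1:ℝ) ≤ (NumberField.InfinitePlace.mult (pl j) : ℝ) :=
        NumberField.InfinitePlace.one_le_mult
      have hgoal : -Real.log ((pl j) ((u i : 𝓞 K) : K)) ≤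
          (NumberField.InfinitePlace.mult (pl j) : ℝ) *
            (-Real.log ((pl j) ((u i : 𝓞 K) : K))) := by nlinarith
      rw [hAapp, Real.norm_eq_abs, abs_of_neg hneg, hF]
      exact hgoal
    have hwcnot : wc ∉ (Finset.univ.erase i).image pl := by
      intro h
      obtain ⟨j, _, hj⟩ := Finset.mem_image.mp h
      exact hwc_ne j hj.symm
    have hsub : insert wc ((Finset.univ.erase i).image pl) ⊆ Finset.univ.erase (pl i) := by
      intro x hx
      rcases Finset.mem_insert.mp hx with rfl | hx
      · exact Finset.mem_erase.mpr ⟨hwc_ne i, Finset.mem_univ _⟩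
      · obtain ⟨j, hj, rfl⟩ := Finset.mem_image.mp hx
        exact Finset.mem_erase.mpr ⟨fun h => (Finset.mem_erase.mp hj).1 (hplinj h),
          Finset.mem_univ _⟩
    calc ∑ j ∈ Finset.univ.erase i, ‖A j i‖
        ≤ ∑ j ∈ Finset.univ.erase i, F (pl j) := Finset.sum_le_sum h1
      _ = ∑ x ∈ (Finset.univ.erase i).image pl, F x :=
          (Finset.sum_image (fun a _ b _ h => hplinj h)).symm
      _ < F wc + ∑ x ∈ (Finset.univ.erase i).image pl, F x :=
          lt_add_of_pos_left _ (hFpos wc (hwc_ne i))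
      _ = ∑ x ∈ insert wc ((Finset.univ.erase i).image pl), F x :=
          (Finset.sum_insert hwcnot).symm
      _ ≤ ∑ w' ∈ Finset.univ.erase (pl i), F w' :=
          Finset.sum_le_sum_of_subset_of_nonneg hsub
            (fun x hx _ => le_of_lt (hFpos x (Finset.mem_erase.mp hx).1))
      _ = A i i := (hAdiag i).symm
      _ ≤ ‖A i i‖ := by rw [Real.norm_eq_abs]; exact le_abs_self _
  have hdet : A.det ≠ 0 := det_ne_zero_of_sum_col_lt_diag hdom
  -- the vectors
  set v : Fin s → (Fin s → ℝ) := fun i => projLog σr (u i) with hvdef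
  have hv : ∀ i j, v i j = A j i := by
    intro i j
    rw [hvdef, hAapp]
    simp only [projLog]
    rw [hplv]
  have hli : LinearIndependent ℝ v := by
    rw [Fintype.linearIndependent_iff]
    intro c hc
    have hAc : A.mulVec c = 0 := by
      funext j
      have h := congrFun hc j
      simp only [Finset.sum_apply, Pi.smul_apply, smul_eq_mul, Pi.zero_apply] at h
      simp only [Matrix.mulVec, dotProduct, Pi.zero_apply]
      rw [← h]
      exact Finset.sum_congr rfl fun i _ => by rw [hv]; ring
    have hminj : Function.Injective A.mulVec :=
      Matrix.mulVec_injective_iff_isUnit.mpr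
        ((Matrix.isUnit_iff_isUnit_det A).mpr (isUnit_iff_ne_zero.mpr hdet))
    have hc0 : c = 0 := hminj (by rw [hAc, Matrix.mulVec_zero])
    intro i; rw [hc0]; rfl
  -- the basis
  have hcard : Fintype.card (Fin s) = Module.finrank ℝ (Fin s → ℝ) := by
    simp [Module.finrank_fintype_fun_eq_card]
  set b : Module.Basis (Fin s) ℝ (Fin s → ℝ) := basisOfLinearIndependentOfCardEqFinrank hli hcard
    with hbdef
  have hb : ⇑b = v := coe_basisOfLinearIndependentOfCardEqFinrank hli hcard
  set b2 : Module.Basis (Fin s) ℝ (Fin s → ℝ) :=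
    b.isUnitSMul (w := fun _ => (2:ℝ)) (fun _ => isUnit_iff_ne_zero.mpr two_ne_zero) with hb2def
  have hb2 : ∀ i, b2 i = (2:ℝ) • v i := by
    intro i
    rw [hb2def, Module.Basis.isUnitSMul_apply, hb]
  -- projLog is a homomorphism
  set PLm : (𝓞 K)ˣ →* Multiplicative (Fin s → ℝ) := MonoidHom.mk'
    (fun x => Multiplicative.ofAdd (projLog σr x)) (by
      intro x y
      show Multiplicative.ofAdd (projLog σr (x * y)) =
        Multiplicative.ofAdd (projLog σr x) * Multiplicative.ofAdd (projLog σr y)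
      rw [← ofAdd_add]
      refine congrArg Multiplicative.ofAdd ?_
      funext j
      have hx := hne x j
      have hy := hne y j
      simp only [projLog, Pi.add_apply]
      rw [show (((x * y : (𝓞 K)ˣ) : 𝓞 K) : K) = ((x : 𝓞 K) : K) * ((y : 𝓞 K) : K) by
        push_cast; ring]
      rw [map_mul, abs_mul, Real.log_mul (abs_ne_zero.mpr hx) (abs_ne_zero.mpr hy)]) with hPLmdef
  have hPLapp : ∀ x : (𝓞 K)ˣ, PLm x = Multiplicative.ofAdd (projLog σr x) := fun x => rfl
  have hPLzpow : ∀ (x : (𝓞 K)ˣ) (m : ℤ), projLog σr (x ^ m) = m • projLog σr x := by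
    intro x m
    have h := congrArg Multiplicative.toAdd (map_zpow PLm x m)
    simpa [hPLapp, toAdd_zpow] using h
  have hPLprod : ∀ (f : Fin s → (𝓞 K)ˣ),
      projLog σr (∏ i, f i) = ∑ i, projLog σr (f i) := by
    intro f
    have h := congrArg Multiplicative.toAdd (map_prod PLm f Finset.univ)
    simpa [hPLapp, toAdd_prod] using h
  -- the homomorphism ψ
  set ψ : Multiplicative (Fin s → ℤ) →* (𝓞 K)ˣ := MonoidHom.mk'
    (fun n => ∏ i, u i ^ (2 * Multiplicative.toAdd n i)) (by
      intro a b
      rw [← Finset.prod_mul_distrib]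
      refine Finset.prod_congr rfl fun i _ => ?_
      rw [← zpow_add]
      congr 1
      simp only [toAdd_mul, Pi.add_apply]
      ring) with hψdef
  have hψapp : ∀ n, ψ n = ∏ i, u i ^ (2 * Multiplicative.toAdd n i) := fun n => rfl
  have hψproj : ∀ n : Multiplicative (Fin s → ℤ),
      projLog σr (ψ n) = ∑ i, ((2 * Multiplicative.toAdd n i : ℤ) : ℝ) • v i := by
    intro n
    rw [hψapp, hPLprod]
    refine Finset.sum_congr rfl fun i _ => ?_
    rw [hPLzpow, Int.cast_smul_eq_zsmul, hvdef]
  have hkey : ∀ (m : ℤ) (i : Fin s), ((2 * m : ℤ) : ℝ) • v i = m • b2 i := by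
    intro m i
    rw [hb2, ← Int.cast_smul_eq_zsmul ℝ m, smul_smul]
    congr 1
    push_cast; ring
  refine ⟨ψ.range, ?_, ?_, ?_, ?_⟩
  · -- totally positive
    intro x hx
    obtain ⟨n, rfl⟩ := hx
    intro i
    have hsq : ψ n = (∏ j, u j ^ (Multiplicative.toAdd n j)) ^ 2 := by
      rw [hψapp, ← Finset.prod_pow]
      refine Finset.prod_congr rfl fun j _ => ?_
      rw [← zpow_natCast (u j ^ (Multiplicative.toAdd n j)), ← zpow_mul]
      congr 1
      push_cast; ring
    rw [hsq]
    set y : (𝓞 K)ˣ := ∏ j, u j ^ (Multiplicative.toAdd n j) with hy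
    have hyne : σr i ((y : 𝓞 K) : K) ≠ 0 := hne y i
    have hcoe : (((y ^ 2 : (𝓞 K)ˣ) : 𝓞 K) : K) = (((y : 𝓞 K) : K)) ^ 2 := by
      push_cast; ring
    rw [hcoe, map_pow]
    exact pow_two_pos_of_ne_zero hyne
  · -- free of rank s
    have hinjψ : Function.Injective ψ := by
      refine (injective_iff_map_eq_one ψ).mpr fun n hn => ?_
      have h0 : ∑ i, ((2 * Multiplicative.toAdd n i : ℤ) : ℝ) • v i = 0 := by
        rw [← hψproj n, hn]
        funext j
        simp [projLog]
      have hz := Fintype.linearIndependent_iff.mp hli _ h0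
      have htz : Multiplicative.toAdd n = 0 := by
        funext i
        have h2 : ((2 * Multiplicative.toAdd n i : ℤ) : ℝ) = 0 := hz i
        have h3 : (2 * Multiplicative.toAdd n i : ℤ) = 0 := by exact_mod_cast h2
        show Multiplicative.toAdd n i = 0
        omega
      rw [← ofAdd_toAdd n, htz, ofAdd_zero]
    exact ⟨(MonoidHom.ofInjective hinjψ).symm⟩
  all_goals {
    have hset : projLog σr '' (ψ.range : Set (𝓞 K)ˣ) =
        (Submodule.span ℤ (Set.range ⇑b2) : Set (Fin s → ℝ)) := by
      ext x
      constructor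
      · rintro ⟨y, hy, rfl⟩
        obtain ⟨n, rfl⟩ := hy
        rw [hψproj n]
        refine Submodule.sum_mem _ fun i _ => ?_
        rw [hkey]
        exact Submodule.smul_mem _ _ (Submodule.subset_span ⟨i, rfl⟩)
      · intro hx
        obtain ⟨c, hc⟩ := (Submodule.mem_span_range_iff_exists_fun ℤ).mp hx
        refine ⟨ψ (Multiplicative.ofAdd c), ⟨Multiplicative.ofAdd c, rfl⟩, ?_⟩
        rw [hψproj, ← hc]
        refine Finset.sum_congr rfl fun i _ => ?_
        simp only [toAdd_ofAdd]
        rw [hkey]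
    first
    | -- discreteness
      (rw [show (projLog σr '' (ψ.range : Set (𝓞 K)ˣ)) =
          (Submodule.span ℤ (Set.range ⇑b2) : Set (Fin s → ℝ)) from hset]
       exact inferInstanceAs (DiscreteTopology (Submodule.span ℤ (Set.range ⇑b2))))
    | -- spanning
      (have hv_mem : ∀ i, v i ∈ Submodule.span ℝ (projLog σr '' (ψ.range : Set (𝓞 K)ˣ)) := by
        intro i
        have hgen : ((2:ℝ)) • v i ∈ projLog σr '' (ψ.range : Set (𝓞 K)ˣ) := by
          refine ⟨ψ (Multiplicative.ofAdd (Pi.single i 1)),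
            ⟨Multiplicative.ofAdd (Pi.single i 1), rfl⟩, ?_⟩
          rw [hψproj]
          simp only [toAdd_ofAdd]
          rw [Finset.sum_eq_single i]
          · rw [Pi.single_eq_same]
            norm_num
          · intro j _ hji
            rw [Pi.single_eq_of_ne hji]
            norm_num
          · intro h
            exact absurd (Finset.mem_univ i) h
        have h1 := Submodule.subset_span (R := ℝ) hgen
        have h2 := Submodule.smul_mem
          (Submodule.span ℝ (projLog σr '' (ψ.range : Set (𝓞 K)ˣ))) ((2:ℝ)⁻¹) h1
        rwa [smul_smul, inv_mul_cancel₀ (two_ne_zero (α := ℝ)), one_smul] at h2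
       rw [eq_top_iff, ← b.span_eq, hb]
       exact Submodule.span_le.mpr (Set.range_subset_iff.mpr hv_mem)) }


end
end

section
/- Let U ⊆ O_K^{*,+} be an admissible subgroup and let Γ = U ⋉ O_K act on ℍ^s × ℂ^t by (u,a)·(z₁,…,z_{s+t}) = (σ₁(u)z₁+σ₁(a),…,σ_{s+t}(u)z_{s+t}+σ_{s+t}(a)). For any fixed (z₁,…,z_s) ∈ ℍ^s, let L = {(z₁,…,z_s)} × ℂ^t ⊆ ℍ^s × ℂ^t. Then for every γ ∈ Γ with γ ≠ 1, one has γ(L) ∩ L = ∅. -/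
/-!
Setting: `K` is a number field with exactly `s ≥ 1` real embeddings
`σr 0, …, σr (s-1) : K →+* ℝ` and `2t ≥ 2` complex (non-real) embeddings, of which
`σc 0, …, σc (t-1) : K →+* ℂ` are pairwise non-conjugate representatives.
-/

noncomputable section
open NumberField

lemma key_inj {s : ℕ} (f : (Fin s → ℤ) →+ (Fin s → ℝ))
    (hspan : Submodule.span ℝ (Set.range f) = ⊤) {x : Fin s → ℤ} (hx : f x = 0) : x = 0 := by
  set M : Matrix (Fin s) (Fin s) ℝ := Matrix.of fun i j => f (Pi.single j 1) i with hM
  set fR := Matrix.toLin' M with hfR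
  have hcomp : ∀ y : Fin s → ℤ, fR (fun i => (y i : ℝ)) = f y := by
    intro y
    have hy : f y = ∑ j, y j • f (Pi.single j 1) := by
      conv_lhs => rw [show y = ∑ j, Pi.single j (y j) from (Finset.univ_sum_single y).symm]
      rw [map_sum]
      refine Finset.sum_congr rfl fun j _ => ?_
      rw [← map_zsmul f]
      congr 1
      ext k
      by_cases h : k = j
      · subst h; simp
      · simp [Pi.single_eq_of_ne h]
    funext i
    rw [hy]
    simp only [hfR, Matrix.toLin'_apply, Matrix.mulVec, dotProduct, hM,
      Finset.sum_apply, Pi.smul_apply, zsmul_eq_mul]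
    simp [mul_comm]
  have hsurj : Function.Surjective fR := by
    rw [← LinearMap.range_eq_top, ← top_le_iff, ← hspan, Submodule.span_le]
    rintro _ ⟨y, rfl⟩
    exact ⟨fun i => (y i : ℝ), hcomp y⟩
  have hinj : Function.Injective fR := (LinearMap.injective_iff_surjective).mpr hsurj
  have h0 : (fun i => (x i : ℝ)) = 0 := by
    apply hinj
    rw [hcomp x, hx, map_zero]
  funext i
  have := congrFun h0 i
  simpa using this

lemma unit_embed_ne_zero {K : Type} [Field K] [NumberField K] (σ : K →+* ℝ) (a : (𝓞 K)ˣ) :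
    σ ((a : 𝓞 K) : K) ≠ 0 := by
  have h1 : ((a : 𝓞 K) : K) ≠ 0 := by
    intro h
    have : (a : 𝓞 K) = 0 := by exact_mod_cast h
    exact (Units.ne_zero a) this
  exact (map_ne_zero σ).mpr h1

lemma projLog_mul {K : Type} [Field K] [NumberField K] {s : ℕ}
    (σr : Fin s → (K →+* ℝ)) (a b : (𝓞 K)ˣ) :
    projLog σr (a * b) = projLog σr a + projLog σr b := by
  funext i
  simp only [projLog, Pi.add_apply]
  have : ((((a * b : (𝓞 K)ˣ) : 𝓞 K)) : K) = ((a : 𝓞 K) : K) * ((b : 𝓞 K) : K) := by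
    push_cast; ring
  rw [this, map_mul, abs_mul,
    Real.log_mul (abs_ne_zero.mpr (unit_embed_ne_zero (σr i) a))
      (abs_ne_zero.mpr (unit_embed_ne_zero (σr i) b))]

lemma projLog_one {K : Type} [Field K] [NumberField K] {s : ℕ}
    (σr : Fin s → (K →+* ℝ)) : projLog σr 1 = 0 := by
  funext i
  simp [projLog]

/-- Let `U ⊆ O_K^{*,+}` be admissible and let `Γ = U ⋉ O_K` act on
`ℍˢ × ℂᵗ`. For any fixed `(z₁, …, z_s) ∈ ℍˢ`, let `L = {(z₁,…,z_s)} × ℂᵗ`. Then for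
every `γ ∈ Γ` with `γ ≠ 1`, one has `γ(L) ∩ L = ∅`. -/
theorem otAct_leaf_disjoint
    (K : Type) [Field K] [NumberField K] (s t : ℕ) (hs : 1 ≤ s) (ht : 1 ≤ t)
    (σr : Fin s → (K →+* ℝ)) (hσr : Function.Bijective σr)
    (σc : Fin t → (K →+* ℂ)) (hσc : Function.Injective σc)
    (hσc_nonreal : ∀ j, ¬ ComplexEmbedding.IsReal (σc j))
    (hσc_nonconj : ∀ j k, ComplexEmbedding.conjugate (σc j) ≠ σc k)
    (hσc_exh : ∀ φ : K →+* ℂ, ¬ ComplexEmbedding.IsReal φ →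
      ∃ j, σc j = φ ∨ ComplexEmbedding.conjugate (σc j) = φ)
    (U : Subgroup (𝓞 K)ˣ) (hU : Admissible σr U)
    (z : Fin s → ℂ) (hz : ∀ i, 0 < (z i).im)
    (u : (𝓞 K)ˣ) (hu : u ∈ U) (a : 𝓞 K) (hne : ¬ (u = 1 ∧ a = 0)) :
    (otAct σr σc (u, a) '' {w : (Fin s → ℂ) × (Fin t → ℂ) | w.1 = z}) ∩
      {w : (Fin s → ℂ) × (Fin t → ℂ) | w.1 = z} = ∅ := by
  by_contra h
  rw [← Set.not_nonempty_iff_eq_empty, not_not] at h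
  obtain ⟨w, ⟨p, hp1, rfl⟩, h2⟩ := h
  simp only [Set.mem_setOf_eq] at hp1 h2
  -- h2 : for each i, (σr i u : ℂ) * z i + σr i a = z i
  have heq : ∀ i, (σr i ((u : 𝓞 K) : K) : ℂ) * z i + (σr i (a : K) : ℂ) = z i := by
    intro i
    have := congrFun h2 i
    simpa [otAct, hp1] using this
  -- imaginary parts give σr i u = 1
  have hu1 : ∀ i, σr i ((u : 𝓞 K) : K) = 1 := by
    intro i
    have him := congrArg Complex.im (heq i)
    simp [Complex.add_im, Complex.mul_im] at him
    have : σr i ((u : 𝓞 K) : K) * (z i).im = 1 * (z i).im := by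
      rw [one_mul]; linarith
    exact mul_right_cancel₀ (ne_of_gt (hz i)) this
  -- then σr i a = 0, hence a = 0
  have ha0 : a = 0 := by
    have i0 : Fin s := ⟨0, hs⟩
    have := heq i0
    rw [hu1 i0] at this
    simp only [Complex.ofReal_one, one_mul] at this
    have h3 : (σr i0 (a : K) : ℂ) = 0 := by linear_combination this
    have h4 : σr i0 (a : K) = 0 := by exact_mod_cast h3
    have h5 : (a : K) = 0 := (map_eq_zero (σr i0)).mp h4
    exact_mod_cast h5
  -- now show u = 1 using admissibility
  obtain ⟨hUpos, ⟨e⟩, hdisc, hspan⟩ := hU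
  set F : (Fin s → ℤ) →+ (Fin s → ℝ) :=
    { toFun := fun y => projLog σr ((e.symm (Multiplicative.ofAdd y) : U) : (𝓞 K)ˣ)
      map_zero' := by
        show projLog σr ((e.symm (Multiplicative.ofAdd (0 : Fin s → ℤ)) : U) : (𝓞 K)ˣ) = 0
        have h9 : e.symm (Multiplicative.ofAdd (0 : Fin s → ℤ)) = 1 := by
          simpa using map_one e.symm
        rw [h9]
        simpa using projLog_one σr
      map_add' := by
        intro x y
        show projLog σr ((e.symm (Multiplicative.ofAdd (x + y)) : U) : (𝓞 K)ˣ)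
            = projLog σr ((e.symm (Multiplicative.ofAdd x) : U) : (𝓞 K)ˣ)
              + projLog σr ((e.symm (Multiplicative.ofAdd y) : U) : (𝓞 K)ˣ)
        have h9 : e.symm (Multiplicative.ofAdd (x + y))
            = e.symm (Multiplicative.ofAdd x) * e.symm (Multiplicative.ofAdd y) := by
          rw [← map_mul]; rfl
        rw [h9]
        push_cast
        exact projLog_mul σr _ _ } with hF
  have hrange : Set.range F = projLog σr '' (U : Set (𝓞 K)ˣ) := by
    ext v
    constructor
    · rintro ⟨y, rfl⟩
      exact ⟨((e.symm (Multiplicative.ofAdd y) : U) : (𝓞 K)ˣ),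
        (e.symm (Multiplicative.ofAdd y)).2, rfl⟩
    · rintro ⟨u', hu', rfl⟩
      refine ⟨Multiplicative.toAdd (e ⟨u', hu'⟩), ?_⟩
      simp only [hF, AddMonoidHom.coe_mk, ZeroHom.coe_mk]
      congr 1
      rw [ofAdd_toAdd, MulEquiv.symm_apply_apply]
  have hspan' : Submodule.span ℝ (Set.range F) = ⊤ := by rw [hrange]; exact hspan
  have hprojLog_u : projLog σr u = 0 := by
    funext i
    simp [projLog, hu1 i]
  have hFx : F (Multiplicative.toAdd (e ⟨u, hu⟩)) = 0 := by
    simp only [hF, AddMonoidHom.coe_mk, ZeroHom.coe_mk]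
    rw [ofAdd_toAdd, MulEquiv.symm_apply_apply]
    exact hprojLog_u
  have hx0 : Multiplicative.toAdd (e ⟨u, hu⟩) = 0 := key_inj F hspan' hFx
  have he1 : e ⟨u, hu⟩ = 1 := by
    have : Multiplicative.ofAdd (Multiplicative.toAdd (e ⟨u, hu⟩))
        = Multiplicative.ofAdd 0 := congrArg _ hx0
    simpa using this
  have hu_one : u = 1 := by
    have : (⟨u, hu⟩ : U) = 1 := e.injective (by rw [he1, map_one])
    exact congrArg (fun x : U => (x : (𝓞 K)ˣ)) this
  exact hne ⟨hu_one, ha0⟩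

end
end

section
/- Let U ⊆ O_K^{*,+} be an admissible subgroup. Then the action of the group Γ = U ⋉ O_K on ℍ^s × ℂ^t given by (u,a)·(z₁,…,z_{s+t}) = (σ₁(u)z₁+σ₁(a),…,σ_{s+t}(u)z_{s+t}+σ_{s+t}(a)) is properly discontinuous: for any compact subsets A, B ⊆ ℍ^s × ℂ^t, the set of γ ∈ Γ with γ(A) ∩ B ≠ ∅ is finite. -/
/-!
Setting: `K` is a number field with exactly `s ≥ 1` real embeddings
`σr 0, …, σr (s-1) : K →+* ℝ` and `2t ≥ 2` complex (non-real) embeddings, of which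
`σc 0, …, σc (t-1) : K →+* ℂ` are pairwise non-conjugate representatives.
-/

noncomputable section
open NumberField

section Aux
variable {K : Type} [Field K] [NumberField K] {s : ℕ} (σr : Fin s → (K →+* ℝ))

lemma sigma_val_ne_zero (i : Fin s) (u : (𝓞 K)ˣ) : σr i ((u : 𝓞 K) : K) ≠ 0 := by
  intro h
  have h0 : ((u : 𝓞 K) : K) = 0 := (map_eq_zero_iff (σr i) (σr i).injective).mp h
  exact Units.ne_zero u (RingOfIntegers.coe_eq_zero_iff.mp h0)

lemma projLog_mul_s8 (u v : (𝓞 K)ˣ) :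
    projLog σr (u * v) = projLog σr u + projLog σr v := by
  funext i
  have hu := sigma_val_ne_zero σr i u
  have hv := sigma_val_ne_zero σr i v
  simp only [projLog, Pi.add_apply]
  rw [show (((u * v : (𝓞 K)ˣ) : 𝓞 K) : K) = ((u : 𝓞 K) : K) * ((v : 𝓞 K) : K) by push_cast; ring,
    map_mul, abs_mul, Real.log_mul (abs_ne_zero.mpr hu) (abs_ne_zero.mpr hv)]

lemma projLog_one_s8 : projLog σr 1 = 0 := by
  funext i; simp [projLog]

lemma projLog_inv (u : (𝓞 K)ˣ) : projLog σr u⁻¹ = - projLog σr u := by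
  have h := projLog_mul_s8 σr u u⁻¹
  rw [mul_inv_cancel, projLog_one_s8] at h
  have := h.symm
  funext i
  have hi := congrFun this i
  simp only [Pi.add_apply, Pi.zero_apply] at hi
  simp only [Pi.neg_apply]
  linarith

end Aux

section Aux2
variable {K : Type} [Field K] [NumberField K] {s : ℕ} {σr : Fin s → (K →+* ℝ)}
  {U : Subgroup (𝓞 K)ˣ}

lemma projLog_injOn (hU : Admissible σr U) :
    Set.InjOn (projLog σr) (U : Set (𝓞 K)ˣ) := by
  obtain ⟨hpos, ⟨e⟩, hdisc, hspan⟩ := hU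
  set g : (Fin s → ℤ) →+ (Fin s → ℝ) :=
    { toFun := fun x => projLog σr ((e.symm (Multiplicative.ofAdd x) : U) : (𝓞 K)ˣ)
      map_zero' := by
        show projLog σr ((e.symm (Multiplicative.ofAdd (0 : Fin s → ℤ)) : U) : (𝓞 K)ˣ) = 0
        have h1 : e.symm (Multiplicative.ofAdd (0 : Fin s → ℤ)) = 1 := by simp [ofAdd_zero]
        rw [h1]
        simpa using projLog_one_s8 σr
      map_add' := by
        intro x y
        show projLog σr ((e.symm (Multiplicative.ofAdd (x + y)) : U) : (𝓞 K)ˣ)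
            = projLog σr ((e.symm (Multiplicative.ofAdd x) : U) : (𝓞 K)ˣ)
              + projLog σr ((e.symm (Multiplicative.ofAdd y) : U) : (𝓞 K)ˣ)
        have h1 : e.symm (Multiplicative.ofAdd (x + y))
            = e.symm (Multiplicative.ofAdd x) * e.symm (Multiplicative.ofAdd y) := by
          rw [ofAdd_add, map_mul]
        rw [h1]
        push_cast
        exact projLog_mul_s8 σr _ _ } with hg
  set M : Matrix (Fin s) (Fin s) ℝ := Matrix.of fun i j => g (Pi.single j 1) i with hM
  set G := Matrix.toLin' M with hG
  have hkey : ∀ x : Fin s → ℤ, G (fun j => (x j : ℝ)) = g x := by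
    intro x
    have hx : x = ∑ j, x j • Pi.single j (1 : ℤ) := by
      funext k
      simp [Pi.single_apply, Finset.sum_apply]
    funext i
    have lhs : G (fun j => (x j : ℝ)) i = ∑ j, M i j * (x j : ℝ) := by
      simp [hG, Matrix.toLin'_apply, Matrix.mulVec, dotProduct]
    rw [lhs]
    conv_rhs => rw [hx]
    rw [map_sum, Finset.sum_apply]
    refine Finset.sum_congr rfl fun j _ => ?_
    rw [map_zsmul]
    simp only [Pi.smul_apply, zsmul_eq_mul, hM, Matrix.of_apply]
    push_cast
    ring
  have hsub : projLog σr '' (U : Set (𝓞 K)ˣ) ⊆ (LinearMap.range G : Set (Fin s → ℝ)) := by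
    rintro _ ⟨u, hu, rfl⟩
    have : projLog σr u = g (Multiplicative.toAdd (e ⟨u, hu⟩)) := by
      show _ = projLog σr ((e.symm (Multiplicative.ofAdd (Multiplicative.toAdd (e ⟨u, hu⟩))) : U) : (𝓞 K)ˣ)
      simp
    rw [this, ← hkey]
    exact ⟨_, rfl⟩
  have hrange : LinearMap.range G = ⊤ := by
    rw [← top_le_iff, ← hspan, Submodule.span_le]
    exact hsub
  have hinjG : Function.Injective G :=
    LinearMap.injective_iff_surjective.mpr (LinearMap.range_eq_top.mp hrange)
  have hker : ∀ u ∈ U, projLog σr u = 0 → u = 1 := by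
    intro u hu h0
    set x := Multiplicative.toAdd (e ⟨u, hu⟩) with hx
    have hgx : g x = 0 := by
      have : g x = projLog σr u := by
        show projLog σr ((e.symm (Multiplicative.ofAdd (Multiplicative.toAdd (e ⟨u, hu⟩))) : U) : (𝓞 K)ˣ) = _
        simp
      rw [this, h0]
    have : G (fun j => (x j : ℝ)) = G 0 := by rw [hkey, hgx, map_zero]
    have hx0 : (fun j => (x j : ℝ)) = 0 := hinjG this
    have hxz : x = 0 := by
      funext j
      have := congrFun hx0 j
      rw [Pi.zero_apply] at this
      exact_mod_cast this
    have : e ⟨u, hu⟩ = 1 := by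
      rw [show (1 : Multiplicative (Fin s → ℤ)) = Multiplicative.ofAdd 0 by rfl, ← hxz, hx]
      simp
    have h1 : (⟨u, hu⟩ : U) = 1 := by
      have := congrArg e.symm this
      simpa using this
    exact congrArg Subtype.val h1
  intro u hu v hv h
  have hm : u * v⁻¹ ∈ U := mul_mem hu (inv_mem hv)
  have : projLog σr (u * v⁻¹) = 0 := by
    rw [projLog_mul_s8, projLog_inv, h]; ring
  have := hker _ hm this
  exact mul_inv_eq_one.mp this

end Aux2

section Aux3
variable {K : Type} [Field K] [NumberField K] {s : ℕ} {σr : Fin s → (K →+* ℝ)}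
  {U : Subgroup (𝓞 K)ˣ}

lemma finite_box (hU : Admissible σr U) (lo hi : Fin s → ℝ) :
    {u : (𝓞 K)ˣ | u ∈ U ∧ ∀ i, projLog σr u i ∈ Set.Icc (lo i) (hi i)}.Finite := by
  have hdisc := hU.2.2.1
  have hinj := projLog_injOn hU
  set L : AddSubgroup (Fin s → ℝ) :=
    { carrier := projLog σr '' (U : Set (𝓞 K)ˣ)
      add_mem' := by
        rintro _ _ ⟨u, hu, rfl⟩ ⟨v, hv, rfl⟩
        exact ⟨u * v, mul_mem hu hv, projLog_mul_s8 σr u v⟩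
      zero_mem' := ⟨1, one_mem U, projLog_one_s8 σr⟩
      neg_mem' := by
        rintro _ ⟨u, hu, rfl⟩
        exact ⟨u⁻¹, inv_mem hu, projLog_inv σr u⟩ } with hL
  haveI hdL : DiscreteTopology (L : Set (Fin s → ℝ)) := hdisc
  have hclosed : IsClosed (L : Set (Fin s → ℝ)) := AddSubgroup.isClosed_of_discrete
  have hbox : IsCompact (Set.univ.pi fun i => Set.Icc (lo i) (hi i)) :=
    isCompact_univ_pi fun i => isCompact_Icc
  have hcpt : IsCompact ((L : Set (Fin s → ℝ)) ∩ Set.univ.pi fun i => Set.Icc (lo i) (hi i)) :=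
    hbox.inter_left hclosed
  haveI hd2 : DiscreteTopology
      (((L : Set (Fin s → ℝ)) ∩ Set.univ.pi fun i => Set.Icc (lo i) (hi i) : Set (Fin s → ℝ))) :=
    DiscreteTopology.of_subset hdL Set.inter_subset_left
  have hfin := hcpt.finite ⟨hd2⟩
  refine Set.Finite.of_finite_image (f := projLog σr) (hfin.subset ?_) ?_
  · rintro _ ⟨u, ⟨hu, hbd⟩, rfl⟩
    exact ⟨⟨u, hu, rfl⟩, fun i _ => hbd i⟩
  · exact hinj.mono fun u hu => hu.1

end Aux3

/-- Let `U ⊆ O_K^{*,+}` be admissible. The action of `Γ = U ⋉ O_K` on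
`ℍˢ × ℂᵗ` is properly discontinuous: for any compact subsets `A, B ⊆ ℍˢ × ℂᵗ`, the set
of `γ ∈ Γ` with `γ(A) ∩ B ≠ ∅` is finite. -/
theorem otAct_properlyDiscontinuous
    (K : Type) [Field K] [NumberField K] (s t : ℕ) (hs : 1 ≤ s) (ht : 1 ≤ t)
    (σr : Fin s → (K →+* ℝ)) (hσr : Function.Bijective σr)
    (σc : Fin t → (K →+* ℂ)) (hσc : Function.Injective σc)
    (hσc_nonreal : ∀ j, ¬ ComplexEmbedding.IsReal (σc j))
    (hσc_nonconj : ∀ j k, ComplexEmbedding.conjugate (σc j) ≠ σc k)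
    (hσc_exh : ∀ φ : K →+* ℂ, ¬ ComplexEmbedding.IsReal φ →
      ∃ j, σc j = φ ∨ ComplexEmbedding.conjugate (σc j) = φ)
    (U : Subgroup (𝓞 K)ˣ) (hU : Admissible σr U) :
    ∀ A B : Set ((Fin s → ℂ) × (Fin t → ℂ)), IsCompact A → IsCompact B →
      A ⊆ {w | ∀ i, 0 < (w.1 i).im} → B ⊆ {w | ∀ i, 0 < (w.1 i).im} →
      {g : (𝓞 K)ˣ × 𝓞 K | g.1 ∈ U ∧ ((otAct σr σc g '' A) ∩ B).Nonempty}.Finite := by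
  intro A B hA hB hApos hBpos
  set S := {g : (𝓞 K)ˣ × 𝓞 K | g.1 ∈ U ∧ ((otAct σr σc g '' A) ∩ B).Nonempty} with hSdef
  rcases Set.eq_empty_or_nonempty S with hS | hS
  · exact hS ▸ Set.finite_empty
  obtain ⟨⟨u0, a0⟩, _, w0, ⟨z0, hz0A, _⟩, hw0B⟩ := hS
  have hAne : A.Nonempty := ⟨z0, hz0A⟩
  have hBne : B.Nonempty := ⟨w0, hw0B⟩
  obtain ⟨RA, hRA⟩ := hA.isBounded.exists_norm_le
  obtain ⟨RB, hRB⟩ := hB.isBounded.exists_norm_le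
  -- coordinatewise norm bounds
  have hRA1 : ∀ z ∈ A, ∀ i, ‖z.1 i‖ ≤ RA := fun z hz i =>
    le_trans (norm_le_pi_norm z.1 i) (le_trans (norm_fst_le z) (hRA z hz))
  have hRA2 : ∀ z ∈ A, ∀ j, ‖z.2 j‖ ≤ RA := fun z hz j =>
    le_trans (norm_le_pi_norm z.2 j) (le_trans (norm_snd_le z) (hRA z hz))
  have hRB1 : ∀ w ∈ B, ∀ i, ‖w.1 i‖ ≤ RB := fun w hw i =>
    le_trans (norm_le_pi_norm w.1 i) (le_trans (norm_fst_le w) (hRB w hw))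
  have hRB2 : ∀ w ∈ B, ∀ j, ‖w.2 j‖ ≤ RB := fun w hw j =>
    le_trans (norm_le_pi_norm w.2 j) (le_trans (norm_snd_le w) (hRB w hw))
  -- lower bounds on imaginary parts
  have hmA : ∀ i : Fin s, ∃ m : ℝ, 0 < m ∧ ∀ z ∈ A, m ≤ (z.1 i).im := by
    intro i
    obtain ⟨z, hz, hmin⟩ := hA.exists_isMinOn hAne
      ((Complex.continuous_im.comp ((continuous_apply i).comp continuous_fst)).continuousOn)
    exact ⟨(z.1 i).im, hApos hz i, fun w hw => hmin hw⟩
  choose mA hmA0 hmAle using hmA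
  have hmB : ∀ i : Fin s, ∃ m : ℝ, 0 < m ∧ ∀ w ∈ B, m ≤ (w.1 i).im := by
    intro i
    obtain ⟨w, hw, hmin⟩ := hB.exists_isMinOn hBne
      ((Complex.continuous_im.comp ((continuous_apply i).comp continuous_fst)).continuousOn)
    exact ⟨(w.1 i).im, hBpos hw i, fun v hv => hmin hv⟩
  choose mB hmB0 hmBle using hmB
  have him_le : ∀ (z : (Fin s → ℂ) × (Fin t → ℂ)), ∀ i, (z.1 i).im ≤ ‖z.1 i‖ := by
    intro z i
    calc (z.1 i).im ≤ |(z.1 i).im| := le_abs_self _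
      _ ≤ ‖z.1 i‖ := Complex.abs_im_le_norm _
  have hRApos : 0 < RA := lt_of_lt_of_le (hmA0 ⟨0, hs⟩)
    (le_trans (hmAle ⟨0, hs⟩ z0 hz0A) (le_trans (him_le z0 _) (hRA1 z0 hz0A _)))
  -- the finite set of possible units
  set lo : Fin s → ℝ := fun i => Real.log (mB i / RA) with hlo
  set hi : Fin s → ℝ := fun i => Real.log (RB / mA i) with hhi
  have hF : {u : (𝓞 K)ˣ | u ∈ U ∧ ∀ i, projLog σr u i ∈ Set.Icc (lo i) (hi i)}.Finite :=
    finite_box hU lo hi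
  -- every element of S has first coordinate in that set
  have hmem : ∀ p ∈ S, p.1 ∈ {u : (𝓞 K)ˣ | u ∈ U ∧ ∀ i, projLog σr u i ∈ Set.Icc (lo i) (hi i)} := by
    rintro ⟨u, a⟩ ⟨huU, w, ⟨z, hzA, hzw⟩, hwB⟩
    refine ⟨huU, fun i => ?_⟩
    have hupos : 0 < σr i ((u : 𝓞 K) : K) := hU.1 huU i
    have him : (w.1 i).im = σr i ((u : 𝓞 K) : K) * (z.1 i).im := by
      rw [← hzw]
      simp [otAct]
    have h1 : mB i ≤ (w.1 i).im := hmBle i w hwB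
    have h2 : (w.1 i).im ≤ RB := le_trans (him_le w i) (hRB1 w hwB i)
    have h3 : mA i ≤ (z.1 i).im := hmAle i z hzA
    have h4 : (z.1 i).im ≤ RA := le_trans (him_le z i) (hRA1 z hzA i)
    have h5 : mB i / RA ≤ σr i ((u : 𝓞 K) : K) := by
      rw [div_le_iff₀ hRApos]
      calc mB i ≤ (w.1 i).im := h1
        _ = σr i ((u : 𝓞 K) : K) * (z.1 i).im := him
        _ ≤ σr i ((u : 𝓞 K) : K) * RA := by nlinarith
    have h7 : σr i ((u : 𝓞 K) : K) ≤ RB / mA i := by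
      rw [le_div_iff₀ (hmA0 i)]
      calc σr i ((u : 𝓞 K) : K) * mA i ≤ σr i ((u : 𝓞 K) : K) * (z.1 i).im := by nlinarith
        _ = (w.1 i).im := him.symm
        _ ≤ RB := h2
    have habs : projLog σr u i = Real.log (σr i ((u : 𝓞 K) : K)) := by
      rw [projLog, abs_of_pos hupos]
    constructor
    · rw [habs, hlo]
      exact Real.log_le_log (div_pos (hmB0 i) hRApos) h5
    · rw [habs, hhi]
      exact Real.log_le_log hupos h7
  -- fibers are finite
  have hfiber : ∀ u : (𝓞 K)ˣ, {a : 𝓞 K | (u, a) ∈ S}.Finite := by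
    intro u
    obtain ⟨C1, hC1⟩ := (Set.finite_range fun i => |σr i ((u : 𝓞 K) : K)|).bddAbove
    obtain ⟨C2, hC2⟩ := (Set.finite_range fun j => ‖σc j ((u : 𝓞 K) : K)‖).bddAbove
    set C := max (max C1 C2) 0 with hC
    have hC1' : ∀ i, |σr i ((u : 𝓞 K) : K)| ≤ C := fun i =>
      le_trans (hC1 ⟨i, rfl⟩) (le_trans (le_max_left _ _) (le_max_left _ _))
    have hC2' : ∀ j, ‖σc j ((u : 𝓞 K) : K)‖ ≤ C := fun j =>
      le_trans (hC2 ⟨j, rfl⟩) (le_trans (le_max_right _ _) (le_max_left _ _))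
    have hC0 : 0 ≤ C := le_max_right _ _
    have key : ∀ a ∈ {a : 𝓞 K | (u, a) ∈ S}, ∀ φ : K →+* ℂ, ‖φ ((a : 𝓞 K) : K)‖ ≤ RB + C * RA := by
      rintro a ⟨_, w, ⟨z, hzA, hzw⟩, hwB⟩ φ
      by_cases hφ : ComplexEmbedding.IsReal φ
      · obtain ⟨i, hi'⟩ := hσr.2 hφ.embedding
        have hval : φ ((a : 𝓞 K) : K) = ((σr i ((a : 𝓞 K) : K) : ℝ) : ℂ) := by
          rw [hi']
          exact (hφ.coe_embedding_apply _).symm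
        have heq : ((σr i ((a : 𝓞 K) : K) : ℝ) : ℂ)
            = w.1 i - (σr i ((u : 𝓞 K) : K) : ℂ) * z.1 i := by
          rw [← hzw]
          simp [otAct]
        rw [hval, heq]
        calc ‖w.1 i - (σr i ((u : 𝓞 K) : K) : ℂ) * z.1 i‖
            ≤ ‖w.1 i‖ + ‖(σr i ((u : 𝓞 K) : K) : ℂ) * z.1 i‖ := norm_sub_le _ _
          _ = ‖w.1 i‖ + ‖(σr i ((u : 𝓞 K) : K) : ℂ)‖ * ‖z.1 i‖ := by rw [norm_mul]
          _ ≤ RB + C * RA := by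
              have e1 : ‖(σr i ((u : 𝓞 K) : K) : ℂ)‖ = |σr i ((u : 𝓞 K) : K)| := by
                rw [Complex.norm_real, Real.norm_eq_abs]
              refine add_le_add (hRB1 w hwB i) ?_
              rw [e1]
              exact mul_le_mul (hC1' i) (hRA1 z hzA i) (norm_nonneg _) hC0
      · obtain ⟨j, hj⟩ := hσc_exh φ hφ
        have hval : ‖φ ((a : 𝓞 K) : K)‖ = ‖σc j ((a : 𝓞 K) : K)‖ := by
          rcases hj with hj | hj
          · rw [hj]
          · rw [← hj, ComplexEmbedding.conjugate_coe_eq]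
            simp [Complex.norm_conj]
        have heq : σc j ((a : 𝓞 K) : K) = w.2 j - σc j ((u : 𝓞 K) : K) * z.2 j := by
          rw [← hzw]
          simp [otAct]
        rw [hval, heq]
        calc ‖w.2 j - σc j ((u : 𝓞 K) : K) * z.2 j‖
            ≤ ‖w.2 j‖ + ‖σc j ((u : 𝓞 K) : K) * z.2 j‖ := norm_sub_le _ _
          _ = ‖w.2 j‖ + ‖σc j ((u : 𝓞 K) : K)‖ * ‖z.2 j‖ := by rw [norm_mul]
          _ ≤ RB + C * RA := by
              have e1 : ‖σc j ((u : 𝓞 K) : K)‖ = ‖σc j ((u : 𝓞 K) : K)‖ := rfl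
              refine add_le_add (hRB2 w hwB j) ?_
              rw [e1]
              exact mul_le_mul (hC2' j) (hRA2 z hzA j) (norm_nonneg _) hC0
    have hfin := NumberField.Embeddings.finite_of_norm_le K ℂ (RB + C * RA)
    refine Set.Finite.of_finite_image (f := fun a : 𝓞 K => ((a : 𝓞 K) : K)) (hfin.subset ?_) ?_
    · rintro _ ⟨a, ha, rfl⟩
      exact ⟨RingOfIntegers.isIntegral_coe a, key a ha⟩
    · exact fun a _ b _ h => RingOfIntegers.coe_injective h
  -- assemble
  refine Set.Finite.subset (Set.Finite.biUnion hF fun u _ => ((hfiber u).image (Prod.mk u))) ?_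
  rintro ⟨u, a⟩ hp
  exact Set.mem_biUnion (hmem _ hp) ⟨a, hp, rfl⟩


end
end

section
/- Consider the additive action of O_K on ℍ^s × ℂ^t by translations, a·(z₁,…,z_{s+t}) = (z₁+σ₁(a),…,z_{s+t}+σ_{s+t}(a)). The quotient (ℍ^s × ℂ^t)/O_K is homeomorphic to (ℝ_{>0})^s × (ℝ/ℤ)^n, where n = s + 2t (i.e. to the trivial torus bundle over (ℝ_{>0})^s with fiber the n-dimensional torus). -/
/-!
Setting: `K` is a number field with exactly `s ≥ 1` real embeddings
`σr 0, …, σr (s-1) : K →+* ℝ` and `2t ≥ 2` complex (non-real) embeddings, of which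
`σc 0, …, σc (t-1) : K →+* ℂ` are pairwise non-conjugate representatives.
-/

noncomputable section
open NumberField

/-- A `Quot` by a relation matching the fibers of an open quotient map is homeomorphic
to the target. -/
noncomputable def quotHomeoOfIsOpenQuotientMap {X Y : Type*} [TopologicalSpace X]
    [TopologicalSpace Y] (r : X → X → Prop) (q : X → Y) (hq : IsOpenQuotientMap q)
    (hr : ∀ x y, r x y ↔ q x = q y) : Quot r ≃ₜ Y := by
  refine Equiv.toHomeomorphOfContinuousOpen
    (Equiv.ofBijective (Quot.lift q fun a b h => (hr a b).1 h) ⟨?_, ?_⟩) ?_ ?_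
  · rintro ⟨x⟩ ⟨y⟩ h
    exact Quot.sound ((hr x y).2 h)
  · intro y
    obtain ⟨x, rfl⟩ := hq.surjective y
    exact ⟨Quot.mk r x, rfl⟩
  · exact continuous_quot_lift _ hq.continuous
  · intro U hU
    have hsurj : Function.Surjective (Quot.mk r) := Quot.mk_surjective
    have : U = Quot.mk r '' (Quot.mk r ⁻¹' U) := (Set.image_preimage_eq U hsurj).symm
    rw [this, Set.image_image]
    have : (Quot.mk r ⁻¹' U).image (fun x => Quot.lift q (fun a b h => (hr a b).1 h) (Quot.mk r x))
        = q '' (Quot.mk r ⁻¹' U) := rfl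
    exact this ▸ hq.isOpenMap _ (hU.preimage continuous_quot_mk)


/-- Split `ℍ^s × ℂ^t` into positive imaginary parts and the rest. -/
noncomputable def splitHomeo (s t : ℕ) :
    {w : (Fin s → ℂ) × (Fin t → ℂ) // ∀ i, 0 < (w.1 i).im} ≃ₜ
      ((Fin s → {r : ℝ // 0 < r}) × ((Fin s → ℝ) × (Fin t → ℂ))) where
  toFun x := (fun i => ⟨(x.val.1 i).im, x.prop i⟩, (fun i => (x.val.1 i).re, x.val.2))
  invFun p := ⟨(fun i => Complex.mk (p.2.1 i) (p.1 i).val, p.2.2), fun i => (p.1 i).prop⟩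
  left_inv x := by
    ext <;> simp
  right_inv p := by
    ext <;> simp
  continuous_toFun := by
    refine Continuous.prodMk (continuous_pi fun i => Continuous.subtype_mk ?_ _) ?_
    · exact Complex.continuous_im.comp ((continuous_apply i).comp
        (continuous_fst.comp continuous_subtype_val))
    · refine Continuous.prodMk (continuous_pi fun i => ?_) ?_
      · exact Complex.continuous_re.comp ((continuous_apply i).comp
          (continuous_fst.comp continuous_subtype_val))
      · exact continuous_snd.comp continuous_subtype_val
  continuous_invFun := by
    refine Continuous.subtype_mk (Continuous.prodMk (continuous_pi fun i => ?_)
      (continuous_snd.comp continuous_snd)) _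
    have : (fun p : (Fin s → {r : ℝ // 0 < r}) × ((Fin s → ℝ) × (Fin t → ℂ)) =>
        Complex.mk (p.2.1 i) (p.1 i).val) = fun p => (p.2.1 i : ℂ) + (p.1 i).val * Complex.I := by
      funext p
      apply Complex.ext <;> simp
    rw [this]
    fun_prop

section AuxNT
open NumberField.InfinitePlace Module


variable (K : Type) [Field K] [NumberField K] {s t : ℕ}
    (σr : Fin s → (K →+* ℝ)) (σc : Fin t → (K →+* ℂ))

theorem exists_torus_quot_map (hσr : Function.Bijective σr)
    (hσc : Function.Injective σc)
    (hσc_nonreal : ∀ j, ¬ ComplexEmbedding.IsReal (σc j))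
    (hσc_nonconj : ∀ j k, ComplexEmbedding.conjugate (σc j) ≠ σc k)
    (hσc_exh : ∀ φ : K →+* ℂ, ¬ ComplexEmbedding.IsReal φ →
      ∃ j, σc j = φ ∨ ComplexEmbedding.conjugate (σc j) = φ) :
    ∃ f : ((Fin s → ℝ) × (Fin t → ℂ)) → (Fin (s + 2 * t) → AddCircle (1 : ℝ)),
      IsOpenQuotientMap f ∧ ∀ u v, (f u = f v ↔ ∃ a : 𝓞 K,
        ((fun i => σr i ((a : 𝓞 K) : K)) , (fun j => σc j ((a : 𝓞 K) : K))) = v - u) := by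
  classical
  -- the real places
  have hreal : ∀ i, ComplexEmbedding.IsReal (Complex.ofRealHom.comp (σr i)) := fun i =>
    ComplexEmbedding.isReal_iff.mpr (RingHom.ext fun x => Complex.conj_ofReal _)
  set gR : Fin s → {w : InfinitePlace K // IsReal w} :=
    fun i => ⟨mk (Complex.ofRealHom.comp (σr i)), isReal_mk_iff.mpr (hreal i)⟩ with hgR
  have hgR_emb : ∀ i, InfinitePlace.embedding (gR i).1 = Complex.ofRealHom.comp (σr i) := by
    intro i
    rcases embedding_mk_eq (Complex.ofRealHom.comp (σr i)) with h | h
    · exact h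
    · rwa [ComplexEmbedding.isReal_iff.mp (hreal i)] at h
  have hgR_real : ∀ i x, embedding_of_isReal (gR i).2 x = σr i x := by
    intro i x
    have h1 := embedding_of_isReal_apply (gR i).2 x
    rw [hgR_emb i] at h1
    exact Complex.ofReal_injective h1
  have hgR_bij : Function.Bijective gR := by
    constructor
    · intro i j h
      have h2 : InfinitePlace.mk (Complex.ofRealHom.comp (σr i)) =
          InfinitePlace.mk (Complex.ofRealHom.comp (σr j)) := Subtype.ext_iff.mp h
      rcases mk_eq_iff.mp h2 with h3 | h3
      · refine hσr.injective (RingHom.ext fun x => ?_)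
        have := RingHom.congr_fun h3 x
        exact Complex.ofReal_injective this
      · rw [ComplexEmbedding.isReal_iff.mp (hreal i)] at h3
        refine hσr.injective (RingHom.ext fun x => ?_)
        have := RingHom.congr_fun h3 x
        exact Complex.ofReal_injective this
    · intro w
      obtain ⟨i, hi⟩ := hσr.surjective (embedding_of_isReal w.2)
      refine ⟨i, Subtype.ext ?_⟩
      have h4 : Complex.ofRealHom.comp (σr i) = InfinitePlace.embedding w.1 := by
        rw [hi]; exact RingHom.ext fun x => embedding_of_isReal_apply w.2 x
      show InfinitePlace.mk (Complex.ofRealHom.comp (σr i)) = w.1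
      rw [h4, mk_embedding]
  set eR : Fin s ≃ {w : InfinitePlace K // IsReal w} := Equiv.ofBijective gR hgR_bij with heR
  -- the complex places
  set gC : Fin t → {w : InfinitePlace K // IsComplex w} :=
    fun j => ⟨mk (σc j), isComplex_mk_iff.mpr (hσc_nonreal j)⟩ with hgC
  have hgC_bij : Function.Bijective gC := by
    constructor
    · intro j k h
      have h2 : mk (σc j) = mk (σc k) := Subtype.ext_iff.mp h
      rcases mk_eq_iff.mp h2 with h3 | h3
      · exact hσc h3
      · exact absurd h3 (hσc_nonconj j k)
    · intro w
      have hw : ¬ ComplexEmbedding.IsReal (InfinitePlace.embedding w.1) := isComplex_iff.mp w.2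
      obtain ⟨j, hj⟩ := hσc_exh _ hw
      refine ⟨j, Subtype.ext ?_⟩
      show InfinitePlace.mk (σc j) = w.1
      rcases hj with hj | hj
      · rw [hj, mk_embedding]
      · rw [← mk_embedding w.1, ← hj, mk_eq_iff]
        right; rfl
  set eC : Fin t ≃ {w : InfinitePlace K // IsComplex w} := Equiv.ofBijective gC hgC_bij with heC
  -- twists
  set tw : Fin t → (ℂ ≃ₗ[ℝ] ℂ) := fun j =>
    if InfinitePlace.embedding (InfinitePlace.mk (σc j)) = σc j then LinearEquiv.refl ℝ ℂ
    else Complex.conjAe.toLinearEquiv with htw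
  have htw_emb : ∀ j x, tw j (InfinitePlace.embedding (InfinitePlace.mk (σc j)) x) = σc j x := by
    intro j x
    by_cases h : InfinitePlace.embedding (mk (σc j)) = σc j
    · simp [htw, h]
    · have h2 : InfinitePlace.embedding (InfinitePlace.mk (σc j)) =
          ComplexEmbedding.conjugate (σc j) := (embedding_mk_eq (σc j)).resolve_left h
      simp only [htw]
      rw [if_neg h, h2]
      show Complex.conjAe (ComplexEmbedding.conjugate (σc j) x) = σc j x
      simp [ComplexEmbedding.conjugate_coe_eq]
  -- the linear equiv
  set Ψ : mixedEmbedding.mixedSpace K ≃ₗ[ℝ] ((Fin s → ℝ) × (Fin t → ℂ)) :=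
    (LinearEquiv.funCongrLeft ℝ ℝ eR).prodCongr
      ((LinearEquiv.funCongrLeft ℝ ℂ eC).trans (LinearEquiv.piCongrRight tw)) with hΨdef
  have hΨ : ∀ x : K, Ψ (mixedEmbedding K x) =
      ((fun i => σr i x), (fun j => σc j x)) := by
    intro x
    refine Prod.ext (funext fun i => ?_) (funext fun j => ?_)
    · show (mixedEmbedding K x).1 (eR i) = σr i x
      rw [NumberField.mixedEmbedding.mixedEmbedding_apply_isReal]
      exact hgR_real i x
    · show tw j ((mixedEmbedding K x).2 (eC j)) = σc j x
      rw [NumberField.mixedEmbedding.mixedEmbedding_apply_isComplex]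
      exact htw_emb j x
  -- cardinality
  have hcard : Fintype.card (Free.ChooseBasisIndex ℤ (𝓞 K)) = s + 2 * t := by
    have h1 : nrRealPlaces K = s := (Fintype.card_congr eR).symm.trans (Fintype.card_fin s)
    have h2 : nrComplexPlaces K = t := (Fintype.card_congr eC).symm.trans (Fintype.card_fin t)
    rw [← Module.finrank_eq_card_chooseBasisIndex, RingOfIntegers.rank,
      ← card_add_two_mul_card_eq_rank, h1, h2]
  set e : Free.ChooseBasisIndex ℤ (𝓞 K) ≃ Fin (s + 2 * t) := Fintype.equivFinOfCardEq hcard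
  set b : Basis (Fin (s + 2 * t)) ℝ ((Fin s → ℝ) × (Fin t → ℂ)) :=
    ((NumberField.mixedEmbedding.latticeBasis K).map Ψ).reindex e with hb
  have hspan : ∀ v, v ∈ Submodule.span ℤ (Set.range b) ↔
      ∃ a : 𝓞 K, ((fun i => σr i ((a : 𝓞 K) : K)), (fun j => σc j ((a : 𝓞 K) : K))) = v := by
    intro v
    rw [hb, Basis.range_reindex]
    have hrange : Set.range ((NumberField.mixedEmbedding.latticeBasis K).map Ψ)
        = ⇑Ψ '' Set.range (NumberField.mixedEmbedding.latticeBasis K) := by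
      rw [← Set.range_comp]
      exact congrArg _ (funext fun i => Basis.map_apply _ _ _)
    rw [hrange]
    have him : Submodule.span ℤ (⇑Ψ '' Set.range (NumberField.mixedEmbedding.latticeBasis K))
        = Submodule.map (Ψ.restrictScalars ℤ).toLinearMap
            (Submodule.span ℤ (Set.range (NumberField.mixedEmbedding.latticeBasis K))) := by
      rw [Submodule.map_span]
      rfl
    rw [him, Submodule.mem_map]
    constructor
    · rintro ⟨y, hy, rfl⟩
      rw [NumberField.mixedEmbedding.mem_span_latticeBasis] at hy
      obtain ⟨a, ha⟩ := hy
      refine ⟨a, ?_⟩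
      have h5 : (Ψ.restrictScalars ℤ).toLinearMap y = Ψ y := rfl
      rw [h5, ← ha]
      exact (hΨ ((a : 𝓞 K) : K)).symm
    · rintro ⟨a, rfl⟩
      refine ⟨mixedEmbedding K ((a : 𝓞 K) : K), ?_, ?_⟩
      · rw [NumberField.mixedEmbedding.mem_span_latticeBasis]
        exact ⟨a, rfl⟩
      · exact hΨ ((a : 𝓞 K) : K)
  -- the map to the torus
  have key : ∀ u v : (Fin s → ℝ) × (Fin t → ℂ),
      ((fun k => ((b.equivFunL u k : ℝ) : AddCircle (1 : ℝ))) =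
        (fun k => ((b.equivFunL v k : ℝ) : AddCircle (1 : ℝ)))) ↔
      v - u ∈ Submodule.span ℤ (Set.range b) := by
    intro u v
    rw [funext_iff, b.mem_span_iff_repr_mem ℤ (v - u)]
    refine forall_congr' fun k => ?_
    rw [QuotientAddGroup.eq_iff_sub_mem]
    have h1 : b.equivFunL u k - b.equivFunL v k = - (b.repr (v - u) k) := by
      simp only [Basis.equivFunL_apply, map_sub, Finsupp.coe_sub, Pi.sub_apply]
      ring
    rw [h1]
    constructor
    · intro h
      obtain ⟨n, hn⟩ := AddSubgroup.mem_zmultiples_iff.mp h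
      rw [zsmul_eq_mul, mul_one] at hn
      refine ⟨-n, ?_⟩
      simp only [algebraMap_int_eq, eq_intCast]
      push_cast
      linarith
    · rintro ⟨n, hn⟩
      refine AddSubgroup.mem_zmultiples_iff.mpr ⟨-n, ?_⟩
      simp only [algebraMap_int_eq, eq_intCast] at hn
      rw [zsmul_eq_mul, mul_one]
      push_cast
      linarith
  refine ⟨fun v k => ((b.equivFunL v k : ℝ) : AddCircle (1 : ℝ)), ?_, ?_⟩
  · have h1 : IsOpenQuotientMap (fun x : ℝ => (x : AddCircle (1 : ℝ))) :=
      QuotientAddGroup.isOpenQuotientMap_mk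
    have h2 : IsOpenQuotientMap
        (Pi.map fun (_ : Fin (s + 2 * t)) (x : ℝ) => (x : AddCircle (1 : ℝ))) :=
      IsOpenQuotientMap.piMap fun _ => h1
    have h3 : IsOpenQuotientMap (⇑b.equivFunL) :=
      ⟨b.equivFunL.surjective, b.equivFunL.continuous, b.equivFunL.toHomeomorph.isOpenMap⟩
    exact h2.comp h3
  · intro u v
    rw [key u v, hspan (v - u)]

end AuxNT

/-- The quotient of `ℍˢ × ℂᵗ` by the additive action of `O_K` by
translations `a·z = (zᵢ + σᵢ(a))ᵢ` is homeomorphic to `(ℝ_{>0})ˢ × (ℝ/ℤ)ⁿ` with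
`n = s + 2t` (the trivial torus bundle over `(ℝ_{>0})ˢ` with fiber the `n`-torus). -/
theorem otQuotient_translations_homeomorph
    (K : Type) [Field K] [NumberField K] (s t : ℕ) (hs : 1 ≤ s) (ht : 1 ≤ t)
    (σr : Fin s → (K →+* ℝ)) (hσr : Function.Bijective σr)
    (σc : Fin t → (K →+* ℂ)) (hσc : Function.Injective σc)
    (hσc_nonreal : ∀ j, ¬ ComplexEmbedding.IsReal (σc j))
    (hσc_nonconj : ∀ j k, ComplexEmbedding.conjugate (σc j) ≠ σc k)
    (hσc_exh : ∀ φ : K →+* ℂ, ¬ ComplexEmbedding.IsReal φ →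
      ∃ j, σc j = φ ∨ ComplexEmbedding.conjugate (σc j) = φ) :
    Nonempty
      ((Quot fun x y : {w : (Fin s → ℂ) × (Fin t → ℂ) // ∀ i, 0 < (w.1 i).im} =>
          ∃ a : 𝓞 K, otAct σr σc (1, a) x.val = y.val) ≃ₜ
        ((Fin s → {r : ℝ // 0 < r}) × (Fin (s + 2 * t) → AddCircle (1 : ℝ)))) := by
  obtain ⟨f, hfq, hfker⟩ := exists_torus_quot_map K σr σc hσr hσc hσc_nonreal hσc_nonconj hσc_exh
  have hP : ∀ (x : {w : (Fin s → ℂ) × (Fin t → ℂ) // ∀ i, 0 < (w.1 i).im}),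
      splitHomeo s t x =
        ((fun i => ⟨(x.val.1 i).im, x.prop i⟩), ((fun i => (x.val.1 i).re), x.val.2)) :=
    fun _ => rfl
  have hone : ∀ (i : Fin s), σr i (((1 : (𝓞 K)ˣ) : 𝓞 K) : K) = 1 := by intro i; simp
  have honec : ∀ (j : Fin t), σc j (((1 : (𝓞 K)ˣ) : 𝓞 K) : K) = 1 := by intro j; simp
  refine ⟨quotHomeoOfIsOpenQuotientMap _
    (fun x => ((splitHomeo s t x).1, f (splitHomeo s t x).2)) ?_ ?_⟩
  · have h1 : IsOpenQuotientMap (Prod.map (id : (Fin s → {r : ℝ // 0 < r}) → _) f) :=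
      IsOpenQuotientMap.id.prodMap hfq
    have h2 : IsOpenQuotientMap (⇑(splitHomeo s t)) :=
      ⟨(splitHomeo s t).surjective, (splitHomeo s t).continuous, (splitHomeo s t).isOpenMap⟩
    exact h1.comp h2
  · intro x y
    constructor
    · rintro ⟨a, ha⟩
      have ha1 : ∀ i, x.val.1 i + (σr i ((a : 𝓞 K) : K) : ℂ) = y.val.1 i := by
        intro i
        have := congrFun (congrArg Prod.fst ha) i
        simpa [otAct, hone i] using this
      have ha2 : ∀ j, x.val.2 j + σc j ((a : 𝓞 K) : K) = y.val.2 j := by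
        intro j
        have := congrFun (congrArg Prod.snd ha) j
        simpa [otAct, honec j] using this
      simp only [hP]
      refine Prod.ext (funext fun i => Subtype.ext ?_) ?_
      · show (x.val.1 i).im = (y.val.1 i).im
        rw [← ha1 i]; simp
      · show f ((fun i => (x.val.1 i).re), x.val.2) = f ((fun i => (y.val.1 i).re), y.val.2)
        rw [hfker]
        refine ⟨a, Prod.ext (funext fun i => ?_) (funext fun j => ?_)⟩
        · show σr i ((a : 𝓞 K) : K) = (y.val.1 i).re - (x.val.1 i).re
          rw [← ha1 i]; simp
        · show σc j ((a : 𝓞 K) : K) = y.val.2 j - x.val.2 j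
          rw [← ha2 j]; ring
    · intro hq
      simp only [hP, Prod.ext_iff] at hq
      obtain ⟨hq1, hq2⟩ := hq
      have him : ∀ i, (x.val.1 i).im = (y.val.1 i).im := by
        intro i
        exact Subtype.ext_iff.mp (congrFun hq1 i)
      rw [hfker] at hq2
      obtain ⟨a, ha⟩ := hq2
      rw [Prod.ext_iff] at ha
      obtain ⟨ha1, ha2⟩ := ha
      refine ⟨a, Prod.ext (funext fun i => ?_) (funext fun j => ?_)⟩
      · show (σr i (((1 : (𝓞 K)ˣ) : 𝓞 K) : K) : ℂ) * x.val.1 i + (σr i ((a : 𝓞 K) : K) : ℂ)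
          = y.val.1 i
        rw [hone i]
        have hre : σr i ((a : 𝓞 K) : K) = (y.val.1 i).re - (x.val.1 i).re := congrFun ha1 i
        apply Complex.ext
        · simp [hre]
        · simpa using him i
      · show σc j (((1 : (𝓞 K)ˣ) : 𝓞 K) : K) * x.val.2 j + σc j ((a : 𝓞 K) : K) = y.val.2 j
        rw [honec j]
        have := congrFun ha2 j
        simp only [Prod.snd_sub, Pi.sub_apply] at this
        rw [one_mul, this]
        ring

end
end
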